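/- Let n ≥ 2 have exactly j distinct prime factors, and let k ≥ j. Then n/φ(n) ≤ N_k/φ(N_k), where N_k is the product of the first k primes and φ is Euler's totient function. -/

import Mathlib

/-- `N k`, the `k`-th primorial: product of the first `k` primes. -/
noncomputable def primorial' (k : ℕ) : ℕ := ∏ i ∈ Finset.range k, Nat.nth Nat.Prime i

open Finset

private lemma ratio_eq (n : ℕ) (hn : 1 ≤ n) :
    (n : ℝ) / (Nat.totient n : ℝ) = ∏ p ∈ n.primeFactors, ((p : ℝ) / ((p : ℝ) - 1)) := by
  have h := Nat.totient_mul_prod_primeFactors n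
  have hφ : 0 < Nat.totient n := Nat.totient_pos.mpr hn
  have hcast : (Nat.totient n : ℝ) * ∏ p ∈ n.primeFactors, (p : ℝ)
      = (n : ℝ) * ∏ p ∈ n.primeFactors, ((p : ℝ) - 1) := by
    have := congrArg (Nat.cast (R := ℝ)) h
    push_cast at this
    rw [this]
    congr 1
    refine Finset.prod_congr rfl fun p hp => ?_
    have : 1 ≤ p := (Nat.prime_of_mem_primeFactors hp).one_lt.le
    push_cast [Nat.cast_sub this]
    ring
  have hφ' : (Nat.totient n : ℝ) ≠ 0 := by positivity
  have hd : ∏ p ∈ n.primeFactors, ((p : ℝ) - 1) ≠ 0 := by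
    refine Finset.prod_ne_zero_iff.mpr fun p hp => ?_
    have : (2 : ℝ) ≤ p := by exact_mod_cast (Nat.prime_of_mem_primeFactors hp).two_le
    linarith
  rw [Finset.prod_div_distrib]
  rw [div_eq_div_iff hφ' hd]
  linarith [hcast]

private lemma nth_le_orderEmb {s : Finset ℕ} (hs : ∀ p ∈ s, p.Prime) {j : ℕ}
    (h : s.card = j) (i : Fin j) : Nat.nth Nat.Prime i ≤ s.orderEmbOfFin h i := by
  have key : ∀ m : ℕ, ∀ hm : m < j, m ≤ Nat.count Nat.Prime (s.orderEmbOfFin h ⟨m, hm⟩) := by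
    intro m
    induction m with
    | zero => intro _; exact Nat.zero_le _
    | succ m ih =>
      intro hm
      have hm' : m < j := Nat.lt_of_succ_lt hm
      have hlt : s.orderEmbOfFin h ⟨m, hm'⟩ < s.orderEmbOfFin h ⟨m + 1, hm⟩ :=
        (s.orderEmbOfFin h).strictMono (by simp)
      have hp : Nat.Prime (s.orderEmbOfFin h ⟨m, hm'⟩) :=
        hs _ (s.orderEmbOfFin_mem h _)
      calc m + 1 ≤ Nat.count Nat.Prime (s.orderEmbOfFin h ⟨m, hm'⟩) + 1 := by
            exact Nat.succ_le_succ (ih hm')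
        _ = Nat.count Nat.Prime (s.orderEmbOfFin h ⟨m, hm'⟩ + 1) := by
            rw [Nat.count_succ, if_pos hp]
        _ ≤ Nat.count Nat.Prime (s.orderEmbOfFin h ⟨m + 1, hm⟩) :=
            Nat.count_monotone _ hlt
  have hp : Nat.Prime (s.orderEmbOfFin h i) := hs _ (s.orderEmbOfFin_mem h i)
  have h1 : (i : ℕ) ≤ Nat.count Nat.Prime (s.orderEmbOfFin h i) := by
    have := key i i.isLt
    simpa using this
  calc Nat.nth Nat.Prime i ≤ Nat.nth Nat.Prime (Nat.count Nat.Prime (s.orderEmbOfFin h i)) :=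
        (Nat.nth_le_nth Nat.infinite_setOf_prime).mpr h1
    _ = s.orderEmbOfFin h i := Nat.nth_count hp

theorem div_totient_le_primorial (n k : ℕ) (hn : 2 ≤ n) (hk : n.primeFactors.card ≤ k) :
    (n : ℝ) / (Nat.totient n : ℝ) ≤ (primorial' k : ℝ) / (Nat.totient (primorial' k) : ℝ) := by
  set f : ℕ → ℝ := fun p => (p : ℝ) / ((p : ℝ) - 1) with hf
  -- facts about f
  have hf_one_le : ∀ p : ℕ, p.Prime → 1 ≤ f p := by
    intro p hp
    have h2 : (2 : ℝ) ≤ p := by exact_mod_cast hp.two_le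
    rw [hf]
    have : (0:ℝ) < (p:ℝ) - 1 := by linarith
    rw [le_div_iff₀ this]
    linarith
  have hf_anti : ∀ p q : ℕ, p.Prime → p ≤ q → f q ≤ f p := by
    intro p q hp hpq
    have h2 : (2 : ℝ) ≤ p := by exact_mod_cast hp.two_le
    have hq : (p : ℝ) ≤ q := by exact_mod_cast hpq
    have h1 : (0:ℝ) < (p:ℝ) - 1 := by linarith
    have h1' : (0:ℝ) < (q:ℝ) - 1 := by linarith
    rw [hf, div_le_div_iff₀ h1' h1]
    nlinarith
  -- nth primes
  have hnthp : ∀ i : ℕ, (Nat.nth Nat.Prime i).Prime := Nat.prime_nth_prime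
  have hnth_inj : Function.Injective (Nat.nth Nat.Prime) :=
    (Nat.nth_strictMono Nat.infinite_setOf_prime).injective
  have hf_pos : ∀ p : ℕ, p.Prime → 0 ≤ f p := fun p hp => le_trans zero_le_one (hf_one_le p hp)
  -- primorial facts
  have hNpos : 1 ≤ primorial' k := by
    rw [primorial']
    exact Finset.one_le_prod' fun i _ => (hnthp i).one_lt.le
  have hprod : (∏ p ∈ (Finset.range k).image (Nat.nth Nat.Prime), p) = primorial' k := by
    rw [Finset.prod_image (fun i _ j _ h => hnth_inj h), primorial']
  have himg : (primorial' k).primeFactors = (Finset.range k).image (Nat.nth Nat.Prime) := by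
    rw [← hprod]
    exact Nat.primeFactors_prod (by
      intro p hp
      obtain ⟨i, _, rfl⟩ := Finset.mem_image.mp hp
      exact hnthp i)
  have hRHS : (primorial' k : ℝ) / (Nat.totient (primorial' k) : ℝ)
      = ∏ i ∈ Finset.range k, f (Nat.nth Nat.Prime i) := by
    rw [ratio_eq _ hNpos, himg, Finset.prod_image (fun i _ j _ h => hnth_inj h)]
  -- LHS
  set s := n.primeFactors with hs
  set j := s.card with hj
  have hsp : ∀ p ∈ s, Nat.Prime p := fun p hp => Nat.prime_of_mem_primeFactors hp
  have himage : Finset.image (s.orderEmbOfFin (rfl : s.card = j)) Finset.univ = s := by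
    apply Finset.coe_injective
    rw [Finset.coe_image, Finset.coe_univ, Set.image_univ, Finset.range_orderEmbOfFin]
  have hLHS : (n : ℝ) / (Nat.totient n : ℝ)
      = ∏ i : Fin j, f (s.orderEmbOfFin (rfl : s.card = j) i) :=
    calc (n : ℝ) / (Nat.totient n : ℝ) = ∏ p ∈ s, f p := ratio_eq n (by omega)
      _ = ∏ i : Fin j, f (s.orderEmbOfFin (rfl : s.card = j) i) := by
          conv_lhs => rw [← himage]
          exact Finset.prod_image fun i _ l _ h =>
            (s.orderEmbOfFin (rfl : s.card = j)).injective h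
  rw [hLHS, hRHS]
  calc ∏ i : Fin j, f (s.orderEmbOfFin (rfl : s.card = j) i)
      ≤ ∏ i : Fin j, f (Nat.nth Nat.Prime i) := by
        apply Finset.prod_le_prod
        · intro i _
          exact hf_pos _ (hsp _ (s.orderEmbOfFin_mem (rfl : s.card = j) i))
        · intro i _
          exact hf_anti _ _ (hnthp i) (nth_le_orderEmb hsp (rfl : s.card = j) i)
    _ = ∏ i ∈ Finset.range j, f (Nat.nth Nat.Prime i) :=
        Fin.prod_univ_eq_prod_range (fun i => f (Nat.nth Nat.Prime i)) j
    _ ≤ ∏ i ∈ Finset.range k, f (Nat.nth Nat.Prime i) := by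
        rw [← Finset.prod_range_mul_prod_Ico (fun i => f (Nat.nth Nat.Prime i)) hk]
        have h1 : (1:ℝ) ≤ ∏ i ∈ Finset.Ico j k, f (Nat.nth Nat.Prime i) := by
          calc (1:ℝ) = ∏ _i ∈ Finset.Ico j k, (1:ℝ) := by simp
            _ ≤ _ := Finset.prod_le_prod (fun i _ => zero_le_one)
                (fun i _ => hf_one_le _ (hnthp i))
        have h0 : (0:ℝ) ≤ ∏ i ∈ Finset.range j, f (Nat.nth Nat.Prime i) :=
          Finset.prod_nonneg fun i _ => hf_pos _ (hnthp i)
        nlinarith
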